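/- arXiv:2501.00281 — 3 statements merged into one kernel-verified Lean document; each statement's English description precedes it below -/
import Mathlib

section
/- Let p ∈ (0,1/2), 0 < ε < 1/2 − p, and let x, y ∈ {0,1}^n have Hamming distance 2σn with σ ≤ p + 2ε. Then |T^n_{W,ε}(x) ∩ T^n_{W,ε}(y)| ≤ (√2·εn + 1)² · 2^{n[(1−2σ)·h((p−σ+ε)/(1−2σ)) + 2σ]}, where h is the binary entropy function. -/
open scoped Classical

/-- Binary entropy function (base-2 logarithm); `Real.logb 2 0 = 0` so `h 0 = h 1 = 0`. -/
noncomputable def binH (q : ℝ) : ℝ := -q * Real.logb 2 q - (1 - q) * Real.logb 2 (1 - q)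

/-- Conditional typical set for a BSC with crossover `p` and slack `ε`, as a `Finset`. -/
noncomputable def typSet (n : ℕ) (p ε : ℝ) (x : Fin n → Bool) : Finset (Fin n → Bool) :=
  Finset.univ.filter (fun z =>
    (n : ℝ) * (p - ε) ≤ (hammingDist x z : ℝ) ∧ (hammingDist x z : ℝ) ≤ (n : ℝ) * (p + ε))


lemma card_le_interval (F : Finset ℕ) (α β : ℝ) (h0 : 0 ≤ β - α + 1)
    (h : ∀ u ∈ F, α ≤ (u:ℝ) ∧ (u:ℝ) ≤ β) : (F.card : ℝ) ≤ β - α + 1 := by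
  have hsub : F.image (Nat.cast : ℕ → ℤ) ⊆ Finset.Icc ⌈α⌉ ⌊β⌋ := by
    intro z hz
    simp only [Finset.mem_image] at hz
    obtain ⟨u, hu, rfl⟩ := hz
    obtain ⟨h1, h2⟩ := h u hu
    rw [Finset.mem_Icc]
    exact ⟨Int.ceil_le.mpr (by exact_mod_cast h1), Int.le_floor.mpr (by exact_mod_cast h2)⟩
  have hcard : F.card ≤ (Finset.Icc ⌈α⌉ ⌊β⌋).card := by
    rw [← Finset.card_image_of_injective F (fun a b h => by exact_mod_cast h : Function.Injective (Nat.cast : ℕ → ℤ))]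
    exact Finset.card_le_card hsub
  rw [Int.card_Icc] at hcard
  rcases le_or_gt (⌊β⌋ + 1 - ⌈α⌉) 0 with hle | hlt
  · have : (⌊β⌋ + 1 - ⌈α⌉).toNat = 0 := Int.toNat_of_nonpos hle
    rw [this] at hcard
    simp only [Nat.le_zero] at hcard
    rw [hcard]
    simpa using h0
  · have h1 : (((⌊β⌋ + 1 - ⌈α⌉).toNat : ℤ) : ℝ) = ((⌊β⌋:ℝ) + 1 - ⌈α⌉) := by
      rw [Int.toNat_of_nonneg hlt.le]; push_cast; ring
    have h2 : (F.card : ℝ) ≤ (((⌊β⌋ + 1 - ⌈α⌉).toNat : ℤ) : ℝ) := by exact_mod_cast hcard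
    rw [h1] at h2
    have := Int.floor_le β
    have := Int.le_ceil α
    linarith

lemma card_le_halfinterval (F : Finset ℕ) (c : ℕ) (α β : ℝ) (hαβ : α ≤ β)
    (h : ∀ u ∈ F, u % 2 = c ∧ α ≤ (u:ℝ) ∧ (u:ℝ) ≤ β) : (F.card : ℝ) ≤ (β - α)/2 + 1 := by
  have hinj : Set.InjOn (fun u => u / 2) (F : Set ℕ) := by
    intro a ha b hb hab
    simp only [Finset.mem_coe] at ha hb
    have h1 := (h a ha).1
    have h2 := (h b hb).1
    simp only at hab
    omega
  rw [← Finset.card_image_of_injOn hinj]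
  have := card_le_interval (F.image (fun u => u / 2)) ((α - c)/2) ((β - c)/2) (by linarith)
    (by
      intro w hw
      simp only [Finset.mem_image] at hw
      obtain ⟨u, hu, rfl⟩ := hw
      obtain ⟨hc, h1, h2⟩ := h u hu
      have hu2 : ((u/2 : ℕ) : ℝ) = ((u:ℝ) - c)/2 := by
        have h3 : u = 2 * (u/2) + c := by omega
        have h4 : (u:ℝ) = 2 * ((u/2 : ℕ):ℝ) + c := by exact_mod_cast h3
        linarith
      rw [hu2]
      constructor <;> linarith)
  linarith

lemma bilin_bound (e0 e1 v0 v1 M : ℝ) (hM : 0 ≤ M)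
    (he0 : 0 ≤ e0) (he1 : 0 ≤ e1) (hv0 : 0 ≤ v0) (hv1 : 0 ≤ v1)
    (he0' : e0 ≤ M + 1) (he1' : e1 ≤ M + 1) (hv0' : v0 ≤ M + 1) (hv1' : v1 ≤ M + 1)
    (he : e0 + e1 ≤ 2*M + 1) (hv : v0 + v1 ≤ 2*M + 1) :
    e0 * v0 + e1 * v1 ≤ 2*M^2 + 2*M + 1 := by
  have key : ∀ a b : ℝ, 0 ≤ a → 0 ≤ b → a ≤ M+1 → b ≤ M+1 → a + b ≤ 2*M+1 →
      a^2 + b^2 ≤ 2*M^2 + 2*M + 1 := by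
    intro a b ha hb ha' hb' hab
    rcases le_or_gt (a + b) (M + 1) with hc | hc
    · nlinarith [mul_nonneg ha hb]
    · nlinarith [mul_nonneg (sub_nonneg.mpr ha') (sub_nonneg.mpr hb'),
        mul_nonneg (sub_nonneg.mpr hc.le) (sub_nonneg.mpr hab)]
  nlinarith [key e0 e1 he0 he1 he0' he1' he, key v0 v1 hv0 hv1 hv0' hv1' hv,
    sq_nonneg (e0 - v0), sq_nonneg (e1 - v1)]

lemma card_parity_pairs (T : Finset (ℕ × ℕ)) (a M : ℝ) (d : ℕ) (hM : 0 ≤ M)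
    (h : ∀ t ∈ T, (a ≤ (t.1:ℝ) ∧ (t.1:ℝ) ≤ a + 2*M) ∧ (a ≤ (t.2:ℝ) ∧ (t.2:ℝ) ≤ a + 2*M)
      ∧ (t.1 + t.2) % 2 = d % 2) :
    (T.card : ℝ) ≤ 2*M^2 + 2*M + 1 := by
  classical
  set b := a + 2*M with hb
  -- U, V : projections
  set U := T.image Prod.fst with hU
  set V := T.image Prod.snd with hV
  have hUmem : ∀ u ∈ U, a ≤ (u:ℝ) ∧ (u:ℝ) ≤ b := by
    intro u hu
    obtain ⟨t, ht, rfl⟩ := Finset.mem_image.mp hu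
    exact (h t ht).1
  have hVmem : ∀ v ∈ V, a ≤ (v:ℝ) ∧ (v:ℝ) ≤ b := by
    intro v hv
    obtain ⟨t, ht, rfl⟩ := Finset.mem_image.mp hv
    exact (h t ht).2.1
  -- parity classes
  set E0 := U.filter (fun u => u % 2 = 0) with hE0
  set E1 := U.filter (fun u => u % 2 = 1) with hE1
  set V0 := V.filter (fun v => v % 2 = 0) with hV0
  set V1 := V.filter (fun v => v % 2 = 1) with hV1
  have hhalf : ∀ (W : Finset ℕ) (c : ℕ), (∀ w ∈ W, a ≤ (w:ℝ) ∧ (w:ℝ) ≤ b) →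
      ((W.filter (fun u => u % 2 = c)).card : ℝ) ≤ M + 1 := by
    intro W c hW
    have := card_le_halfinterval (W.filter (fun u => u % 2 = c)) c a b (by simp [hb]; linarith)
      (by intro u hu
          rw [Finset.mem_filter] at hu
          exact ⟨hu.2, hW u hu.1⟩)
    have hba : (b - a)/2 = M := by rw [hb]; ring
    linarith [this, hba ▸ this]
  have he0 : ((E0.card : ℝ)) ≤ M + 1 := hhalf U 0 hUmem
  have he1 : ((E1.card : ℝ)) ≤ M + 1 := hhalf U 1 hUmem
  have hv0 : ((V0.card : ℝ)) ≤ M + 1 := hhalf V 0 hVmem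
  have hv1 : ((V1.card : ℝ)) ≤ M + 1 := hhalf V 1 hVmem
  have hE1' : E1 = U.filter (fun u => ¬ u % 2 = 0) := by
    rw [hE1]; apply Finset.filter_congr; intro u _; omega
  have hUsum : E0.card + E1.card = U.card := by
    rw [hE0, hE1']
    exact Finset.card_filter_add_card_filter_not (p := fun u => u % 2 = 0)
  have hV1' : V1 = V.filter (fun u => ¬ u % 2 = 0) := by
    rw [hV1]; apply Finset.filter_congr; intro u _; omega
  have hVsum : V0.card + V1.card = V.card := by
    rw [hV0, hV1']
    exact Finset.card_filter_add_card_filter_not (p := fun u => u % 2 = 0)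
  have hUcard : (U.card : ℝ) ≤ 2*M + 1 :=
    card_le_interval U a b (by linarith) hUmem |>.trans (by linarith)
  have hVcard : (V.card : ℝ) ≤ 2*M + 1 :=
    card_le_interval V a b (by linarith) hVmem |>.trans (by linarith)
  -- split T by parity of first coordinate
  have hT : T.card = (T.filter (fun t => t.1 % 2 = 0)).card + (T.filter (fun t => ¬ t.1 % 2 = 0)).card :=
    (Finset.card_filter_add_card_filter_not (p := fun t : ℕ × ℕ => t.1 % 2 = 0)).symm
  -- each piece is in a product
  have hsub0 : T.filter (fun t => t.1 % 2 = 0) ⊆ E0 ×ˢ (if d % 2 = 0 then V0 else V1) := by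
    intro t ht
    rw [Finset.mem_filter] at ht
    obtain ⟨ht, hpar⟩ := ht
    have hp := (h t ht).2.2
    rw [Finset.mem_product]
    constructor
    · rw [hE0, Finset.mem_filter]; exact ⟨Finset.mem_image_of_mem _ ht, hpar⟩
    · rcases Nat.mod_two_eq_zero_or_one d with hd | hd <;> simp [hd] at hp ⊢ <;>
        [rw [hV0]; rw [hV1]] <;> rw [Finset.mem_filter] <;>
        exact ⟨Finset.mem_image_of_mem _ ht, by omega⟩
  have hsub1 : T.filter (fun t => ¬ t.1 % 2 = 0) ⊆ E1 ×ˢ (if d % 2 = 0 then V1 else V0) := by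
    intro t ht
    rw [Finset.mem_filter] at ht
    obtain ⟨ht, hpar⟩ := ht
    have hp := (h t ht).2.2
    rw [Finset.mem_product]
    constructor
    · rw [hE1, Finset.mem_filter]; exact ⟨Finset.mem_image_of_mem _ ht, by omega⟩
    · rcases Nat.mod_two_eq_zero_or_one d with hd | hd <;> simp [hd] at hp ⊢ <;>
        [rw [hV1]; rw [hV0]] <;> rw [Finset.mem_filter] <;>
        exact ⟨Finset.mem_image_of_mem _ ht, by omega⟩
  have hc0 := Finset.card_le_card hsub0
  have hc1 := Finset.card_le_card hsub1
  rw [Finset.card_product] at hc0 hc1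
  have hEsum : (E0.card : ℝ) + E1.card ≤ 2*M + 1 := by
    have : (E0.card + E1.card : ℕ) = U.card := hUsum
    push_cast [← this] at hUcard ⊢
    linarith [hUcard]
  have hVsum' : (V0.card : ℝ) + V1.card ≤ 2*M + 1 := by
    have : (V0.card + V1.card : ℕ) = V.card := hVsum
    push_cast [← this] at hVcard ⊢
    linarith [hVcard]
  have hc : (T.card : ℝ) ≤ (E0.card : ℝ) * (if d % 2 = 0 then V0 else V1).card
      + (E1.card : ℝ) * (if d % 2 = 0 then V1 else V0).card := by
    rw [hT]
    push_cast
    have c0 : ((T.filter (fun t => t.1 % 2 = 0)).card : ℝ) ≤ (E0.card : ℝ) * (if d % 2 = 0 then V0 else V1).card := by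
      exact_mod_cast hc0
    have c1 : ((T.filter (fun t => ¬ t.1 % 2 = 0)).card : ℝ) ≤ (E1.card : ℝ) * (if d % 2 = 0 then V1 else V0).card := by
      exact_mod_cast hc1
    linarith
  have n0 : (0:ℝ) ≤ (E0.card:ℝ) := Nat.cast_nonneg _
  have n1 : (0:ℝ) ≤ (E1.card:ℝ) := Nat.cast_nonneg _
  have n2 : (0:ℝ) ≤ (V0.card:ℝ) := Nat.cast_nonneg _
  have n3 : (0:ℝ) ≤ (V1.card:ℝ) := Nat.cast_nonneg _
  rcases Nat.mod_two_eq_zero_or_one d with hd | hd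
  · rw [hd] at hc; simp only [if_pos rfl] at hc
    exact hc.trans (bilin_bound _ _ _ _ M hM n0 n1 n2 n3 he0 he1 hv0 hv1 hEsum hVsum')
  · rw [hd] at hc; simp only [if_neg (by omega : ¬ (1:ℕ) % 2 = 0)] at hc
    exact hc.trans (bilin_bound _ _ _ _ M hM n0 n1 n3 n2 he0 he1 hv1 hv0 hEsum (by linarith))



lemma binH_eq (q : ℝ) : binH q = Real.binEntropy q / Real.log 2 := by
  unfold binH Real.binEntropy Real.logb
  rw [Real.log_inv, Real.log_inv]
  ring

lemma binH_mono {a b : ℝ} (ha : 0 ≤ a) (hab : a ≤ b) (hb : b ≤ 1/2) : binH a ≤ binH b := by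
  rw [binH_eq, binH_eq]
  have hlog : (0:ℝ) < Real.log 2 := Real.log_pos (by norm_num)
  have := Real.binEntropy_strictMonoOn.monotoneOn
    (Set.mem_Icc.mpr ⟨ha, by linarith⟩) (Set.mem_Icc.mpr ⟨by linarith, by norm_num; linarith⟩) hab
  exact div_le_div_of_nonneg_right this hlog.le |>.trans_eq rfl

lemma binH_zero : binH 0 = 0 := by
  unfold binH
  simp [Real.logb]

lemma binH_one : binH 1 = 0 := by
  unfold binH
  simp [Real.logb]

lemma choose_le_rpow_binH (m j : ℕ) (hj : j ≤ m) :
    (m.choose j : ℝ) ≤ (2:ℝ) ^ ((m:ℝ) * binH ((j:ℝ)/(m:ℝ))) := by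
  rcases Nat.eq_zero_or_pos m with rfl | hm
  · interval_cases j
    simp [binH_zero]
  rcases Nat.eq_zero_or_pos j with rfl | hj0
  · simp [binH_zero]
  rcases eq_or_lt_of_le hj with rfl | hjm
  · rw [div_self (by positivity : (j:ℝ) ≠ 0)]
    simp [binH_one]
  -- now 0 < j < m
  set q : ℝ := (j:ℝ)/(m:ℝ) with hq
  have hq0 : 0 < q := by positivity
  have hq1 : q < 1 := by
    rw [hq, div_lt_one (by positivity)]
    exact_mod_cast hjm
  have hq1' : 0 < 1 - q := by linarith
  -- single term of binomial expansion ≤ 1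
  have hsum : ∑ i ∈ Finset.range (m+1), q ^ i * (1-q) ^ (m - i) * (m.choose i : ℝ) = 1 := by
    have := add_pow q (1-q) m
    simp only [add_sub_cancel, one_pow] at this
    linarith [this]
  have hterm : q ^ j * (1-q) ^ (m - j) * (m.choose j : ℝ) ≤ 1 := by
    have hs := Finset.single_le_sum (f := fun i => q ^ i * (1-q) ^ (m - i) * (m.choose i : ℝ))
      (fun i _ => by positivity) (Finset.mem_range.mpr (by omega : j < m + 1))
    rw [hsum] at hs
    exact hs
  have hA : 0 < q ^ j * (1-q) ^ (m - j) := by positivity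
  have hle : (m.choose j : ℝ) ≤ (q ^ j * (1-q) ^ (m - j))⁻¹ := by
    rw [inv_eq_one_div, le_div_iff₀ hA]
    linear_combination hterm
  refine hle.trans (le_of_eq ?_)
  -- (q^j (1-q)^(m-j))⁻¹ = 2 ^ (m * binH q)
  have hexp : (m:ℝ) * binH q = (-(j:ℝ)) * Real.logb 2 q + (-(((m-j:ℕ)):ℝ)) * Real.logb 2 (1-q) := by
    unfold binH
    have h1 : (m:ℝ) * q = (j:ℝ) := by
      rw [hq]; field_simp
    have h2 : (m:ℝ) * (1 - q) = ((m-j:ℕ):ℝ) := by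
      have : ((m-j:ℕ):ℝ) = (m:ℝ) - (j:ℝ) := by
        push_cast [Nat.cast_sub hj]; ring
      rw [this]; linarith [h1]
    linear_combination (-(Real.logb 2 q)) * h1 + (-(Real.logb 2 (1-q))) * h2
  rw [hexp, Real.rpow_add (by norm_num : (0:ℝ) < 2)]
  have e1 : (2:ℝ) ^ ((-(j:ℝ)) * Real.logb 2 q) = (q ^ j)⁻¹ := by
    rw [mul_comm, Real.rpow_mul (by norm_num : (0:ℝ) ≤ 2), Real.rpow_logb (by norm_num) (by norm_num) hq0,
      Real.rpow_neg hq0.le, Real.rpow_natCast]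
  have e2 : (2:ℝ) ^ ((-(((m-j:ℕ)):ℝ)) * Real.logb 2 (1-q)) = ((1-q) ^ (m-j))⁻¹ := by
    rw [mul_comm, Real.rpow_mul (by norm_num : (0:ℝ) ≤ 2), Real.rpow_logb (by norm_num) (by norm_num) hq1',
      Real.rpow_neg hq1'.le, Real.rpow_natCast]
  rw [e1, e2, mul_inv]

lemma choose_le_rpow (d k : ℕ) : (d.choose k : ℝ) ≤ (2:ℝ) ^ (d:ℝ) := by
  have h : d.choose k ≤ 2 ^ d := by
    rcases le_or_gt k d with hk | hk
    · calc d.choose k ≤ ∑ i ∈ Finset.range (d+1), d.choose i :=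
            Finset.single_le_sum (fun i _ => Nat.zero_le _) (Finset.mem_range.mpr (by omega))
        _ = 2 ^ d := Nat.sum_range_choose d
    · rw [Nat.choose_eq_zero_of_lt hk]; positivity
  calc (d.choose k : ℝ) ≤ ((2^d : ℕ) : ℝ) := by exact_mod_cast h
    _ = (2:ℝ) ^ (d:ℝ) := by rw [Real.rpow_natCast]; push_cast; ring

lemma filter_split {ι : Type*} (s : Finset ι) (P Q : ι → Prop) [DecidablePred P] [DecidablePred Q] :
    (s.filter P).card = ((s.filter Q).filter P).card + ((s.filter (fun i => ¬ Q i)).filter P).card := by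
  rw [Finset.filter_comm (s := s) (p := Q) (q := P),
    Finset.filter_comm (s := s) (p := fun i => ¬ Q i) (q := P)]
  exact (Finset.card_filter_add_card_filter_not (p := Q)).symm

lemma bool_eq_of_iff {a b c : Bool} (h : (a = c) ↔ (b = c)) : a = b := by
  revert h; revert a b c; decide

lemma bool_ne_flip {a b c : Bool} (h : ¬ a = b) : (¬ c = b) ↔ (c = a) := by
  revert h; revert a b c; decide

set_option maxHeartbeats 1000000 in
theorem typical_intersection_card_bound (n : ℕ) (p ε σ : ℝ) (hp : 0 < p) (hp' : p < 1/2)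
    (hε : 0 < ε) (hε' : ε < 1/2 - p) (x y : Fin n → Bool)
    (hd : (hammingDist x y : ℝ) = 2 * σ * n) (hσ : σ ≤ p + 2 * ε) :
    ((typSet n p ε x ∩ typSet n p ε y).card : ℝ) ≤
      (Real.sqrt 2 * ε * n + 1) ^ 2 *
        (2 : ℝ) ^ ((n : ℝ) * ((1 - 2*σ) * binH ((p - σ + ε) / (1 - 2*σ)) + 2*σ)) := by
  have sqrt2_ge_one : (1:ℝ) ≤ Real.sqrt 2 := by
    rw [show (1:ℝ) = Real.sqrt 1 by rw [Real.sqrt_one]]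
    exact Real.sqrt_le_sqrt (by norm_num)
  have hsq1 : (1:ℝ) ≤ (Real.sqrt 2 * ε * n + 1) ^ 2 := by
    have h0 : (0:ℝ) ≤ Real.sqrt 2 * ε * n := by positivity
    nlinarith [h0]
  -- trivial bound: card ≤ 2^n
  have htriv : ((typSet n p ε x ∩ typSet n p ε y).card : ℝ) ≤ (2:ℝ) ^ (n:ℝ) := by
    calc ((typSet n p ε x ∩ typSet n p ε y).card : ℝ)
        ≤ (Fintype.card (Fin n → Bool) : ℝ) := by exact_mod_cast Finset.card_le_univ _
      _ = ((2^n : ℕ) : ℝ) := by norm_num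
      _ = (2:ℝ) ^ (n:ℝ) := by rw [Real.rpow_natCast]; push_cast; ring
  rcases Nat.eq_zero_or_pos n with rfl | hn
  · have e1 : ((typSet 0 p ε x ∩ typSet 0 p ε y).card : ℝ) ≤ 1 := by
      have h2 : (2:ℝ) ^ ((0:ℕ):ℝ) = 1 := by
        norm_num
      rw [h2] at htriv; exact htriv
    refine e1.trans (le_of_eq ?_)
    norm_num
  set d : ℕ := hammingDist x y with hdd
  have hdn : d ≤ n := by
    have := hammingDist_le_card_fintype (x := x) (y := y)
    simpa [hdd] using this
  rcases eq_or_lt_of_le hdn with hdeq | hdlt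
  · -- d = n, so σ = 1/2
    have hσ2 : 2 * σ = 1 := by
      have : (n:ℝ) = 2 * σ * n := by rw [← hd, hdeq]
      have hn' : (0:ℝ) < n := by exact_mod_cast hn
      field_simp at this
      nlinarith [this]
    have h1 : (1:ℝ) - 2*σ = 0 := by rw [hσ2]; ring
    rw [h1, div_zero, binH_zero, mul_zero, zero_add, hσ2, mul_one]
    calc ((typSet n p ε x ∩ typSet n p ε y).card : ℝ) ≤ (2:ℝ) ^ (n:ℝ) := htriv
      _ ≤ (Real.sqrt 2 * ε * n + 1) ^ 2 * (2:ℝ) ^ (n:ℝ) := by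
          nlinarith [Real.rpow_pos_of_pos (by norm_num : (0:ℝ) < 2) (n:ℝ), hsq1]
  -- main case : d < n
  set A : Finset (Fin n) := Finset.univ.filter (fun i => x i = y i) with hAdef
  set D : Finset (Fin n) := Finset.univ.filter (fun i => ¬ x i = y i) with hDdef
  have hDcard : D.card = d := by
    rw [hdd]; simp [hammingDist, hDdef]
  have hsum_card : A.card + D.card = n := by
    rw [hAdef, hDdef]
    rw [Finset.card_filter_add_card_filter_not]
    simp
  have hAcard : A.card = n - d := by omega
  set S := typSet n p ε x ∩ typSet n p ε y with hSdef
  rcases Finset.eq_empty_or_nonempty S with hSe | hSne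
  · rw [hSe]
    simp only [Finset.card_empty, Nat.cast_zero]
    positivity
  set f : (Fin n → Bool) → ℕ × ℕ :=
    fun z => ((A.filter (fun i => ¬ z i = x i)).card, (D.filter (fun i => ¬ z i = x i)).card)
    with hfdef
  set T := S.image f with hTdef
  have hx_dist : ∀ z, hammingDist x z = (f z).1 + (f z).2 := by
    intro z
    have h1 : hammingDist x z = (Finset.univ.filter (fun i => ¬ z i = x i)).card := by
      simp [hammingDist, ne_comm]
    have h2 := filter_split Finset.univ (fun i => ¬ z i = x i) (fun i => x i = y i)
    rw [h1, h2]
  have hk_le : ∀ z, (f z).2 ≤ d := by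
    intro z
    calc (f z).2 ≤ D.card := by simp only [hfdef]; exact Finset.card_le_card (Finset.filter_subset _ _)
      _ = d := hDcard
  have hj_le : ∀ z, (f z).1 ≤ n - d := by
    intro z
    calc (f z).1 ≤ A.card := by simp only [hfdef]; exact Finset.card_le_card (Finset.filter_subset _ _)
      _ = n - d := hAcard
  have hy_dist : ∀ z, hammingDist y z = (f z).1 + (d - (f z).2) := by
    intro z
    have h1 : hammingDist y z = (Finset.univ.filter (fun i => ¬ z i = y i)).card := by
      simp [hammingDist, ne_comm]
    have h2 := filter_split Finset.univ (fun i => ¬ z i = y i) (fun i => x i = y i)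
    rw [h1, h2]
    show (A.filter (fun i => ¬ z i = y i)).card + (D.filter (fun i => ¬ z i = y i)).card = _
    congr 1
    · simp only [hfdef]; congr 1
      apply Finset.filter_congr
      intro i hi
      rw [hAdef, Finset.mem_filter] at hi
      rw [← hi.2]
    · have e : D.filter (fun i => ¬ z i = y i) = D.filter (fun i => z i = x i) := by
        apply Finset.filter_congr
        intro i hi
        rw [hDdef, Finset.mem_filter] at hi
        exact bool_ne_flip hi.2
      rw [e]
      have h2 := Finset.card_filter_add_card_filter_not (s := D) (p := fun i => z i = x i)
      have h3 : (D.filter (fun i => ¬ z i = x i)).card = (f z).2 := rfl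
      omega
  have hzS : ∀ z ∈ S, ((n:ℝ)*(p-ε) ≤ (hammingDist x z:ℝ) ∧ (hammingDist x z:ℝ) ≤ (n:ℝ)*(p+ε)) ∧
      ((n:ℝ)*(p-ε) ≤ (hammingDist y z:ℝ) ∧ (hammingDist y z:ℝ) ≤ (n:ℝ)*(p+ε)) := by
    intro z hz
    rw [hSdef, Finset.mem_inter] at hz
    unfold typSet at hz
    exact ⟨(Finset.mem_filter.mp hz.1).2, (Finset.mem_filter.mp hz.2).2⟩
  have hxcast : ∀ z, (hammingDist x z : ℝ) = ((f z).1:ℝ) + ((f z).2:ℝ) := by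
    intro z; rw [hx_dist z]; push_cast; ring
  have hycast : ∀ z, (hammingDist y z : ℝ) = ((f z).1:ℝ) + (d:ℝ) - ((f z).2:ℝ) := by
    intro z; rw [hy_dist z]; push_cast [Nat.cast_sub (hk_le z)]; ring
  -- numeric setup
  have hnpos : (0:ℝ) < n := by exact_mod_cast hn
  have hdr : (d:ℝ) = 2*σ*n := hd
  have h2σ : 0 < 1 - 2*σ := by
    have : (d:ℝ) < n := by exact_mod_cast hdlt
    rw [hdr] at this
    nlinarith [this]
  have hndr : ((n - d : ℕ):ℝ) = (1 - 2*σ) * n := by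
    push_cast [Nat.cast_sub hdn]
    rw [hdr]; ring
  have hndpos : (0:ℝ) < ((n - d : ℕ):ℝ) := by rw [hndr]; positivity
  set qs : ℝ := (p - σ + ε) / (1 - 2*σ) with hqs
  -- upper bound on j for z ∈ S
  have hjb : ∀ z ∈ S, ((f z).1 : ℝ) ≤ ((n-d:ℕ):ℝ) * qs := by
    intro z hz
    have hx := (hzS z hz).1.2
    have hy := (hzS z hz).2.2
    rw [hxcast z] at hx
    rw [hycast z] at hy
    have hrq : ((n-d:ℕ):ℝ) * qs = (n:ℝ)*(p - σ + ε) := by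
      rw [hndr, hqs]
      field_simp
    have hk0 : (0:ℝ) ≤ ((f z).2 : ℝ) := Nat.cast_nonneg _
    rw [hrq, hdr] at *
    linarith [hx, hy]
  obtain ⟨z0, hz0⟩ := hSne
  have hps : 0 ≤ p - σ + ε := by
    have h1 := hjb z0 hz0
    have h2 : (0:ℝ) ≤ ((f z0).1 : ℝ) := Nat.cast_nonneg _
    have hrq : ((n-d:ℕ):ℝ) * qs = (n:ℝ)*(p - σ + ε) := by
      rw [hndr, hqs]; field_simp
    nlinarith [h1, h2, hrq]
  have hq0 : 0 ≤ qs := div_nonneg hps h2σ.le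
  have hqh : qs ≤ 1/2 := by
    rw [hqs, div_le_iff₀ h2σ]
    linarith
  set B : ℝ := (2:ℝ) ^ (((n-d:ℕ):ℝ) * binH qs + (d:ℝ)) with hB
  have hBpos : 0 < B := Real.rpow_pos_of_pos (by norm_num) _
  -- fiber bound
  have hfiber : ∀ t ∈ T, ((S.filter (fun z => f z = t)).card : ℝ) ≤ B := by
    intro t ht
    obtain ⟨z, hzmem, hfz⟩ := Finset.mem_image.mp ht
    obtain ⟨j, k⟩ := t
    have hj1 : (f z).1 = j := by rw [hfz]
    have hk1 : (f z).2 = k := by rw [hfz]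
    have hjle : j ≤ n - d := hj1 ▸ hj_le z
    have hkle : k ≤ d := hk1 ▸ hk_le z
    have hcount : (S.filter (fun z => f z = (j,k))).card ≤ (n-d).choose j * d.choose k := by
      have h5 : (S.filter (fun z => f z = (j,k))).card ≤
          ((Finset.powersetCard j A) ×ˢ (Finset.powersetCard k D)).card :=
        Finset.card_le_card_of_injOn
        (fun w => (A.filter (fun i => ¬ w i = x i), D.filter (fun i => ¬ w i = x i)))
        (by
          intro w hw
          rw [Finset.mem_coe, Finset.mem_filter] at hw
          have hw2 := hw.2
          rw [Finset.mem_coe, Finset.mem_product, Finset.mem_powersetCard, Finset.mem_powersetCard]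
          refine ⟨⟨Finset.filter_subset _ _, ?_⟩, ⟨Finset.filter_subset _ _, ?_⟩⟩
          · exact congrArg Prod.fst hw2
          · exact congrArg Prod.snd hw2)
        (by
          intro z1 h1 z2 h2 heq
          have hfst := congrArg Prod.fst heq
          have hsnd := congrArg Prod.snd heq
          simp only at hfst hsnd
          funext i
          rcases em (x i = y i) with hxy | hxy
          · have hiA : i ∈ A := by rw [hAdef]; simp [hxy]
            have hmem := Finset.ext_iff.mp hfst i
            simp only [Finset.mem_filter, hiA, true_and] at hmem
            exact bool_eq_of_iff (not_iff_not.mp hmem)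
          · have hiD : i ∈ D := by rw [hDdef]; simp [hxy]
            have hmem := Finset.ext_iff.mp hsnd i
            simp only [Finset.mem_filter, hiD, true_and] at hmem
            exact bool_eq_of_iff (not_iff_not.mp hmem))
      calc (S.filter (fun z => f z = (j,k))).card
          ≤ ((Finset.powersetCard j A) ×ˢ (Finset.powersetCard k D)).card := h5
        _ = (n-d).choose j * d.choose k := by
            rw [Finset.card_product, Finset.card_powersetCard, Finset.card_powersetCard,
              hAcard, hDcard]
    -- entropy bound
    have hjr : ((j:ℝ)/((n-d:ℕ):ℝ)) ≤ qs := by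
      rw [div_le_iff₀ hndpos]
      have := hjb z hzmem
      rw [hj1] at this
      linarith [this]
    have hmono : binH ((j:ℝ)/((n-d:ℕ):ℝ)) ≤ binH qs :=
      binH_mono (by positivity) hjr hqh
    have hc1 : ((n-d).choose j : ℝ) ≤ (2:ℝ) ^ (((n-d:ℕ):ℝ) * binH qs) := by
      refine (choose_le_rpow_binH (n-d) j hjle).trans ?_
      apply Real.rpow_le_rpow_of_exponent_le (by norm_num)
      exact mul_le_mul_of_nonneg_left hmono hndpos.le
    have hc2 : (d.choose k : ℝ) ≤ (2:ℝ) ^ (d:ℝ) := choose_le_rpow d k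
    calc ((S.filter (fun z => f z = (j,k))).card : ℝ)
        ≤ ((n-d).choose j : ℝ) * (d.choose k : ℝ) := by exact_mod_cast hcount
      _ ≤ (2:ℝ) ^ (((n-d:ℕ):ℝ) * binH qs) * (2:ℝ) ^ (d:ℝ) := by
          apply mul_le_mul hc1 hc2 (Nat.cast_nonneg _) (Real.rpow_nonneg (by norm_num) _)
      _ = B := by rw [hB, Real.rpow_add (by norm_num : (0:ℝ) < 2)]
  -- cardinality of T
  have hTcard : (T.card : ℝ) ≤ 2*(ε*n)^2 + 2*(ε*n) + 1 := by
    set g : ℕ × ℕ → ℕ × ℕ := fun t => (t.1 + t.2, t.1 + (d - t.2)) with hg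
    have hinj : Set.InjOn g T := by
      intro t1 h1 t2 h2 he
      simp only [Finset.mem_coe] at h1 h2
      obtain ⟨z1, _, hfz1⟩ := Finset.mem_image.mp h1
      obtain ⟨z2, _, hfz2⟩ := Finset.mem_image.mp h2
      have hk1 : t1.2 ≤ d := hfz1 ▸ hk_le z1
      have hk2 : t2.2 ≤ d := hfz2 ▸ hk_le z2
      have e1 := congrArg Prod.fst he
      have e2 := congrArg Prod.snd he
      simp only [hg] at e1 e2
      have : t1.1 = t2.1 ∧ t1.2 = t2.2 := by omega
      exact Prod.ext this.1 this.2
    rw [← Finset.card_image_of_injOn hinj]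
    apply card_parity_pairs _ ((n:ℝ)*(p-ε)) (ε*n) d (by positivity)
    intro u hu
    obtain ⟨t, ht, rfl⟩ := Finset.mem_image.mp hu
    obtain ⟨z, hzm, rfl⟩ := Finset.mem_image.mp ht
    have hx1 := (hzS z hzm).1
    have hy1 := (hzS z hzm).2
    rw [hxcast z] at hx1
    rw [hycast z] at hy1
    have hgu : ((g (f z)).1 : ℝ) = ((f z).1:ℝ) + ((f z).2:ℝ) := by
      simp only [hg]; push_cast; ring
    have hgv : ((g (f z)).2 : ℝ) = ((f z).1:ℝ) + (d:ℝ) - ((f z).2:ℝ) := by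
      simp only [hg]; push_cast [Nat.cast_sub (hk_le z)]; ring
    refine ⟨⟨?_, ?_⟩, ⟨?_, ?_⟩, ?_⟩
    · rw [hgu]; linarith [hx1.1]
    · rw [hgu]; linarith [hx1.2]
    · rw [hgv]; linarith [hy1.1]
    · rw [hgv]; linarith [hy1.2]
    · have e1 : (g (f z)).1 = (f z).1 + (f z).2 := rfl
      have e2 : (g (f z)).2 = (f z).1 + (d - (f z).2) := rfl
      have hkz := hk_le z
      omega
  have hTsq : (T.card : ℝ) ≤ (Real.sqrt 2 * ε * n + 1) ^ 2 := by
    have hM : (0:ℝ) ≤ ε * n := by positivity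
    have hs2 : Real.sqrt 2 ^ 2 = 2 := Real.sq_sqrt (by norm_num)
    nlinarith [hTcard, hM, sqrt2_ge_one, hs2, Real.sqrt_nonneg 2]
  -- put it together
  have hsum : (S.card:ℝ) = ∑ t ∈ T, ((S.filter (fun z => f z = t)).card : ℝ) := by
    have := Finset.card_eq_sum_card_fiberwise
      (fun z (hz : z ∈ S) => Finset.mem_image_of_mem f hz)
    exact_mod_cast congrArg Nat.cast this
  have hBeq : ((n-d:ℕ):ℝ) * binH qs + (d:ℝ) = (n:ℝ) * ((1 - 2*σ) * binH qs + 2*σ) := by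
    rw [hndr, hdr]; ring
  calc (S.card:ℝ) = ∑ t ∈ T, ((S.filter (fun z => f z = t)).card : ℝ) := hsum
    _ ≤ ∑ _t ∈ T, B := Finset.sum_le_sum hfiber
    _ = (T.card : ℝ) * B := by rw [Finset.sum_const, nsmul_eq_mul]
    _ ≤ (Real.sqrt 2 * ε * n + 1) ^ 2 * B := mul_le_mul_of_nonneg_right hTsq hBpos.le
    _ = (Real.sqrt 2 * ε * n + 1) ^ 2 *
        (2 : ℝ) ^ ((n : ℝ) * ((1 - 2*σ) * binH qs + 2*σ)) := by rw [hB, hBeq]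
end

section
/- The function g_p(σ) = (1−2σ)·h((p−σ)/(1−2σ)) + 2σ defined on [0,p] with p ∈ (0,1/2) is strictly monotonically decreasing, with g_p(0) = h(p) and g_p(p) = 2p. -/
/-- The function `g_p(σ) = (1 - 2σ) h((p-σ)/(1-2σ)) + 2σ`. -/
noncomputable def gFun (p σ : ℝ) : ℝ := (1 - 2*σ) * binH ((p - σ) / (1 - 2*σ)) + 2*σ

/-- Auxiliary smooth form of `gFun`. -/
noncomputable def gAux (p σ : ℝ) : ℝ :=
  (Real.negMulLog (p - σ) + Real.negMulLog (1 - p - σ) - Real.negMulLog (1 - 2*σ))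
    / Real.log 2 + 2*σ

lemma log2_pos : (0:ℝ) < Real.log 2 := Real.log_pos (by norm_num)

lemma gFun_eq_gAux (p : ℝ) (hp : 0 < p) (hp' : p < 1/2) :
    Set.EqOn (gFun p) (gAux p) (Set.Icc 0 p) := by
  intro σ hσ
  obtain ⟨h0, h1⟩ := hσ
  rcases eq_or_lt_of_le h1 with rfl | hlt
  · simp only [gFun, gAux, binH, Real.negMulLog_zero]
    rw [show (1:ℝ) - σ - σ = 1 - 2*σ by ring]
    simp
  · have ha : 0 < p - σ := by linarith
    have hb : 0 < 1 - p - σ := by linarith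
    have ht : 0 < 1 - 2*σ := by linarith
    have hq : 1 - (p - σ) / (1 - 2*σ) = (1 - p - σ) / (1 - 2*σ) := by
      rw [one_sub_div ht.ne']; congr 1; ring
    have hln2 : Real.log 2 ≠ 0 := log2_pos.ne'
    simp only [gFun, gAux, binH, hq, Real.negMulLog, Real.logb,
      Real.log_div ha.ne' ht.ne', Real.log_div hb.ne' ht.ne']
    field_simp
    ring

lemma gAux_hasDerivAt (p x : ℝ) (ha : p - x ≠ 0) (hb : 1 - p - x ≠ 0) (ht : 1 - 2*x ≠ 0) :
    HasDerivAt (gAux p)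
      ((Real.log (p - x) + Real.log (1 - p - x) - 2 * Real.log (1 - 2*x))
        / Real.log 2 + 2) x := by
  have h1 : HasDerivAt (fun σ => Real.negMulLog (p - σ))
      ((-Real.log (p - x) - 1) * (-1)) x :=
    (Real.hasDerivAt_negMulLog ha).comp x ((hasDerivAt_id x).const_sub p)
  have h2 : HasDerivAt (fun σ => Real.negMulLog (1 - p - σ))
      ((-Real.log (1 - p - x) - 1) * (-1)) x :=
    (Real.hasDerivAt_negMulLog hb).comp x ((hasDerivAt_id x).const_sub (1 - p))
  have h3 : HasDerivAt (fun σ : ℝ => 1 - 2*σ) (-2) x := by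
    simpa using ((hasDerivAt_id x).const_mul 2).const_sub 1
  have h4 : HasDerivAt (fun σ => Real.negMulLog (1 - 2*σ))
      ((-Real.log (1 - 2*x) - 1) * (-2)) x :=
    by have := (Real.hasDerivAt_negMulLog ht).comp x h3; exact this
  have h5 : HasDerivAt (fun σ : ℝ => 2*σ) 2 x := by
    simpa using (hasDerivAt_id x).const_mul 2
  have := (((h1.add h2).sub h4).div_const (Real.log 2)).add h5
  exact this.congr_deriv (by ring)

theorem gFun_strictAnti_and_endpoints (p : ℝ) (hp : 0 < p) (hp' : p < 1/2) :
    StrictAntiOn (gFun p) (Set.Icc 0 p) ∧ gFun p 0 = binH p ∧ gFun p p = 2 * p := by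
  refine ⟨?_, ?_, ?_⟩
  · have hcont : ContinuousOn (gAux p) (Set.Icc 0 p) := by
      apply Continuous.continuousOn
      exact (((((Real.continuous_negMulLog.comp (continuous_const.sub continuous_id)).add
        (Real.continuous_negMulLog.comp (continuous_const.sub continuous_id))).sub
        (Real.continuous_negMulLog.comp (continuous_const.sub (continuous_const.mul
          continuous_id)))).div_const _).add (continuous_const.mul continuous_id))
    have hderiv : ∀ x ∈ interior (Set.Icc 0 p), deriv (gAux p) x < 0 := by
      intro x hx
      rw [interior_Icc] at hx
      obtain ⟨hx0, hxp⟩ := hx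
      have ha : 0 < p - x := by linarith
      have hb : 0 < 1 - p - x := by linarith
      have ht : 0 < 1 - 2*x := by linarith
      rw [(gAux_hasDerivAt p x ha.ne' hb.ne' ht.ne').deriv]
      have key : Real.log (p - x) + Real.log (1 - p - x) + 2 * Real.log 2
          < 2 * Real.log (1 - 2*x) := by
        have h4ab : 0 < 4 * ((p - x) * (1 - p - x)) := by positivity
        have hlt : 4 * ((p - x) * (1 - p - x)) < (1 - 2*x)^2 := by nlinarith [sq_nonneg (1 - 2*p)]
        have := Real.log_lt_log h4ab hlt
        rw [Real.log_mul (by norm_num) (by positivity), Real.log_mul ha.ne' hb.ne',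
          Real.log_pow] at this
        have h4 : Real.log 4 = 2 * Real.log 2 := by
          rw [show (4:ℝ) = 2^2 by norm_num, Real.log_pow]; push_cast; ring
        rw [h4] at this
        push_cast at this
        linarith
      rw [div_add' _ _ _ log2_pos.ne', div_neg_iff]
      right
      exact ⟨by linarith, log2_pos⟩
    exact (strictAntiOn_of_deriv_neg (convex_Icc 0 p) hcont hderiv).congr
      (gFun_eq_gAux p hp hp').symm
  · have ht : (1:ℝ) - 2*0 = 1 := by norm_num
    simp [gFun]
  · have ht : 0 < 1 - 2*p := by linarith
    simp [gFun, binH, Real.negMulLog_zero]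
end

section
/- For the n-fold binary symmetric channel W^n with crossover probability p ∈ (0,1/2), set ε_n = n^{−1/3}, μ_n = 8·2^{−n^{1/3}} and l(n,p) = n(h(p) − ε_n·log₂((1−p)/p)). Then for every x ∈ {0,1}^n, the smooth min-entropy of the output satisfies H_min^{μ_n}(Z)_{W^n(x)} ≥ l(n,p). Moreover μ_n → 0 and l(n,p)/n → h(p) as n → ∞. -/
open scoped Classical
open Finset

/-- Probability that the `n`-fold BSC with crossover `p` maps input `x` to output `z`. -/
noncomputable def bscProb (n : ℕ) (p : ℝ) (x z : Fin n → Bool) : ℝ :=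
  p ^ (hammingDist x z) * (1 - p) ^ (n - hammingDist x z)

/-- Generalized trace distance. -/
noncomputable def GTD {Z : Type*} [Fintype Z] (P Q : Z → ℝ) : ℝ :=
  (1/2) * ∑ z, |P z - Q z| + (1/2) * |∑ z, (P z - Q z)|

/-- Subnormalized distribution. -/
def IsSubDist {Z : Type*} [Fintype Z] (P : Z → ℝ) : Prop := (∀ z, 0 ≤ P z) ∧ ∑ z, P z ≤ 1

noncomputable def μseq (n : ℕ) : ℝ := 8 * (2 : ℝ) ^ (-((n : ℝ) ^ ((1:ℝ)/3)))

noncomputable def lBound (n : ℕ) (p : ℝ) : ℝ :=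
  (n : ℝ) * (binH p - (n : ℝ) ^ (-(1:ℝ)/3) * Real.logb 2 ((1 - p) / p))

private lemma sum_hamming_pow (n : ℕ) (x : Fin n → Bool) (r s : ℝ) :
    ∑ z : Fin n → Bool, r ^ hammingDist x z * s ^ (n - hammingDist x z) = (r + s) ^ n := by
  classical
  have h1 : ∀ z : Fin n → Bool,
      r ^ hammingDist x z * s ^ (n - hammingDist x z)
        = ∏ i, (if x i = z i then s else r) := by
    intro z
    rw [Finset.prod_ite, Finset.prod_const, Finset.prod_const]
    have hd : hammingDist x z = ((univ : Finset (Fin n)).filter (fun i => ¬ x i = z i)).card := by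
      rw [hammingDist]
    have hcc : ((univ : Finset (Fin n)).filter (fun i => x i = z i)).card
        + ((univ : Finset (Fin n)).filter (fun i => ¬ x i = z i)).card = n := by
      rw [Finset.card_filter_add_card_filter_not]
      simp
    rw [hd]
    have : n - ((univ : Finset (Fin n)).filter (fun i => ¬ x i = z i)).card
        = ((univ : Finset (Fin n)).filter (fun i => x i = z i)).card := by omega
    rw [this]; ring
  rw [Finset.sum_congr rfl (fun z _ => h1 z),
    ← Fintype.prod_sum (fun (i : Fin n) (b : Bool) => if x i = b then s else r)]
  have : ∀ i : Fin n, (∑ b : Bool, if x i = b then s else r) = r + s := by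
    intro i; cases hxi : x i <;> simp [Fintype.sum_bool, hxi, add_comm]
  rw [Finset.prod_congr rfl (fun i _ => this i), Finset.prod_const]
  simp

private lemma exp_cubic {t : ℝ} (ht0 : 0 ≤ t) (ht1 : t ≤ 1) :
    Real.exp (-t) ≤ 1 - t + t^2/2 + (2/9)*t^3 := by
  have hb := Real.exp_bound (x := -t)
    (by rw [abs_neg, abs_of_nonneg ht0]; linarith) (n := 3) (by norm_num)
  have hs : ∑ m ∈ Finset.range 3, (-t)^m / (Nat.factorial m) = 1 - t + t^2/2 := by
    simp [Finset.sum_range_succ, Nat.factorial]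
    ring
  rw [hs, abs_neg, abs_of_nonneg ht0] at hb
  have hb2 := (abs_le.mp hb).2
  norm_num [Nat.factorial] at hb2
  nlinarith [hb2]

private lemma log_ineq_to_lt {p ε nr dr Lp Lq : ℝ} (hLpq : Lp < Lq)
    (h : nr * (p * Lp + (1-p) * Lq + ε * (Lq - Lp)) < dr * Lp + (nr - dr) * Lq) :
    dr < nr * (p - ε) := by
  nlinarith [h, hLpq]

private lemma tail_num {p ε nr : ℝ} (hp : 0 ≤ p) (hp' : p ≤ 1/2)
    (hε0 : 0 ≤ ε) (hε3 : ε ≤ 1/3) (hn : 0 ≤ nr) :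
    (2*ε)*(nr*(p-ε)) + nr * (p * (-(2*ε) + (2*ε)^2/2 + (2/9)*(2*ε)^3))
      ≤ -(19/27) * (nr * ε^2) := by
  have hid : (2*ε)*(nr*(p-ε)) + nr * (p * (-(2*ε) + (2*ε)^2/2 + (2/9)*(2*ε)^3))
      = (nr * ε^2) * (-2 + 2*p + (16/9)*p*ε) := by ring
  have hmul : p * ε ≤ (1/2) * (1/3) := mul_le_mul hp' hε3 hε0 (by norm_num)
  have hcoef : -2 + 2*p + (16/9)*p*ε ≤ -(19/27) := by nlinarith [hmul, hp']
  have hX : 0 ≤ nr * ε^2 := by positivity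
  rw [hid]
  nlinarith [mul_le_mul_of_nonneg_left hcoef hX]

private lemma mu_num {y : ℝ} (hy0 : 0 ≤ y) :
    Real.exp (-(19/27) * y) ≤ 8 * Real.exp (Real.log 2 * -y) := by
  have hlog2 : Real.log 2 ≤ 19/27 := by
    have := Real.log_two_lt_d9
    linarith
  have h1 : Real.exp (-(19/27)*y) ≤ Real.exp (Real.log 2 * -y) := by
    apply Real.exp_le_exp.mpr
    nlinarith [mul_nonneg hy0 (by linarith : (0:ℝ) ≤ 19/27 - Real.log 2)]
  nlinarith [h1, Real.exp_pos (Real.log 2 * -y)]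

private lemma rpow27 : (27:ℝ) ^ ((1:ℝ)/3) = 3 := by
  rw [show (27:ℝ) = 3 ^ (3:ℕ) by norm_num, ← Real.rpow_natCast 3 3,
    ← Real.rpow_mul (by norm_num)]
  norm_num

private lemma nε_id {n : ℕ} (hn0 : (0:ℝ) < (n:ℝ)) :
    (n:ℝ) * ((n:ℝ) ^ (-(1:ℝ)/3))^2 = (n:ℝ) ^ ((1:ℝ)/3) := by
  have h1 : ((n:ℝ) ^ (-(1:ℝ)/3))^2 = (n:ℝ) ^ ((-(1:ℝ)/3)*((2:ℕ):ℝ)) := by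
    rw [Real.rpow_mul hn0.le, Real.rpow_natCast]
  rw [h1, show (n:ℝ) * (n:ℝ)^((-(1:ℝ)/3)*((2:ℕ):ℝ))
      = (n:ℝ)^(1:ℝ) * (n:ℝ)^((-(1:ℝ)/3)*((2:ℕ):ℝ)) by rw [Real.rpow_one],
    ← Real.rpow_add hn0]
  norm_num

lemma exists_P' (p : ℝ) (hp : 0 < p) (hp' : p < 1/2) (n : ℕ) (x : Fin n → Bool) :
    ∃ P' : (Fin n → Bool) → ℝ, IsSubDist P' ∧ GTD P' (bscProb n p x) ≤ μseq n ∧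
      ∀ z, P' z ≤ (2 : ℝ) ^ (-(lBound n p)) := by
  classical
  have hq : 0 < 1 - p := by linarith
  have hpq : p < 1 - p := by linarith
  set W : (Fin n → Bool) → ℝ := bscProb n p x with hWdef
  have hW0 : ∀ z, 0 < W z := fun z => by
    simp only [hWdef, bscProb]; positivity
  have hWsum : ∑ z, W z = 1 := by
    simp only [hWdef, bscProb]
    rw [sum_hamming_pow]
    simp
  set τ : ℝ := (2 : ℝ) ^ (-(lBound n p)) with hτdef
  have hτ0 : 0 < τ := Real.rpow_pos_of_pos (by norm_num) _
  set P' : (Fin n → Bool) → ℝ := fun z => if W z ≤ τ then W z else 0 with hP'def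
  set B : Finset (Fin n → Bool) := Finset.univ.filter (fun z => ¬ W z ≤ τ) with hBdef
  set M : ℝ := ∑ z ∈ B, W z with hMdef
  have hM0 : 0 ≤ M := Finset.sum_nonneg fun z _ => (hW0 z).le
  have hM1 : M ≤ 1 := by
    rw [hMdef, ← hWsum]
    exact Finset.sum_le_sum_of_subset_of_nonneg (Finset.subset_univ _)
      (fun z _ _ => (hW0 z).le)
  have hGTD : GTD P' W = M := by
    have habs : ∀ z, |P' z - W z| = if W z ≤ τ then 0 else W z := by
      intro z
      simp only [hP'def]
      split_ifs with h
      · simp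
      · rw [zero_sub, abs_neg, abs_of_pos (hW0 z)]
    have hsub : ∀ z, P' z - W z = if W z ≤ τ then 0 else -W z := by
      intro z
      simp only [hP'def]
      split_ifs with h <;> simp
    have h1 : ∑ z, |P' z - W z| = M := by
      rw [Finset.sum_congr rfl (fun z _ => habs z), Finset.sum_ite, Finset.sum_const,
        smul_zero, zero_add]
    have h2 : ∑ z, (P' z - W z) = -M := by
      rw [Finset.sum_congr rfl (fun z _ => hsub z), Finset.sum_ite, Finset.sum_const,
        smul_zero, zero_add, hMdef, Finset.sum_neg_distrib]
    rw [GTD, h1, h2, abs_neg, abs_of_nonneg hM0]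
    ring
  have hMμ : M ≤ μseq n := by
    by_cases hn : n ≤ 27
    · -- trivial case: μseq n ≥ 1 ≥ M
      have h1 : (n:ℝ) ^ ((1:ℝ)/3) ≤ 3 := by
        calc (n:ℝ) ^ ((1:ℝ)/3) ≤ (27:ℝ) ^ ((1:ℝ)/3) :=
              Real.rpow_le_rpow (Nat.cast_nonneg n) (by exact_mod_cast hn) (by norm_num)
          _ = 3 := rpow27
      have h3 : ((2:ℝ)) ^ (-(3:ℝ)) = 1/8 := by
        rw [Real.rpow_neg (by norm_num), show (3:ℝ) = ((3:ℕ):ℝ) by norm_num,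
          Real.rpow_natCast]
        norm_num
      have h2 : ((2:ℝ)) ^ (-(3:ℝ)) ≤ (2:ℝ) ^ (-((n:ℝ) ^ ((1:ℝ)/3))) :=
        Real.rpow_le_rpow_of_exponent_le (by norm_num) (by linarith)
      rw [h3] at h2
      rw [μseq]
      linarith
    · push_neg at hn
      have hnR : (27:ℝ) < (n:ℝ) := by exact_mod_cast hn
      have hn0 : (0:ℝ) < (n:ℝ) := by linarith
      set ε : ℝ := (n:ℝ) ^ (-(1:ℝ)/3) with hεdef
      have hε0 : 0 < ε := Real.rpow_pos_of_pos hn0 _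
      have hε3 : ε ≤ 1/3 := by
        have h27 : (27:ℝ) ^ (-(1:ℝ)/3) = 1/3 := by
          rw [show (-(1:ℝ)/3) = -((1:ℝ)/3) by norm_num, Real.rpow_neg (by norm_num), rpow27]
          norm_num
        calc ε ≤ (27:ℝ) ^ (-(1:ℝ)/3) :=
              Real.rpow_le_rpow_of_nonpos (by norm_num) hnR.le (by norm_num)
          _ = 1/3 := h27
      set t : ℝ := 2 * ε with htdef
      have ht0 : 0 ≤ t := by positivity
      have ht1 : t ≤ 2/3 := by rw [htdef]; linarith
      set k : ℝ := (n:ℝ) * (p - ε) with hkdef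
      have hl2 : Real.log 2 ≠ 0 := ne_of_gt (Real.log_pos one_lt_two)
      have hlogb : ∀ y : ℝ, Real.logb 2 y * Real.log 2 = Real.log y := by
        intro y; rw [Real.logb]; field_simp
      have hL : lBound n p * Real.log 2
          = (n:ℝ) * (-(p * Real.log p) - (1-p) * Real.log (1-p)
            - ε * (Real.log (1-p) - Real.log p)) := by
        have e1 := hlogb p
        have e2 := hlogb (1 - p)
        have e3 := hlogb ((1-p)/p)
        have e4 : Real.log ((1-p)/p) = Real.log (1-p) - Real.log p :=
          Real.log_div hq.ne' hp.ne'
        simp only [lBound, binH, ← hεdef]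
        linear_combination (-(n:ℝ)*p) * e1 + (-(n:ℝ)*(1-p)) * e2 + (-(n:ℝ)*ε) * e3
          + (-(n:ℝ)*ε) * e4
      have hlogpq : Real.log p < Real.log (1-p) := Real.log_lt_log hp hpq
      -- every bad z has small hamming distance
      have hbad : ∀ z ∈ B, (hammingDist x z : ℝ) < k := by
        intro z hz
        rw [hBdef, Finset.mem_filter] at hz
        have hτW : τ < W z := lt_of_not_ge hz.2
        set d : ℕ := hammingDist x z with hddef
        have hdn : d ≤ n := by
          simpa using (hammingDist_le_card_fintype (x := x) (y := z))
        have hWz : W z = p ^ d * (1-p) ^ (n - d) := rfl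
        have hlogW : Real.log (W z)
            = (d:ℝ) * Real.log p + ((n:ℝ) - (d:ℝ)) * Real.log (1-p) := by
          rw [hWz, Real.log_mul (by positivity) (by positivity), Real.log_pow, Real.log_pow,
            Nat.cast_sub hdn]
        have hlogτ : Real.log τ = -(lBound n p) * Real.log 2 := by
          rw [hτdef]; exact Real.log_rpow (by norm_num) _
        have hlt : -(lBound n p) * Real.log 2
            < (d:ℝ) * Real.log p + ((n:ℝ) - (d:ℝ)) * Real.log (1-p) := by
          rw [← hlogτ, ← hlogW]; exact Real.log_lt_log hτ0 hτW
        have hineq : (n:ℝ) * (p * Real.log p + (1-p) * Real.log (1-p)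
            + ε * (Real.log (1-p) - Real.log p))
            < (d:ℝ) * Real.log p + ((n:ℝ) - (d:ℝ)) * Real.log (1-p) := by
          linarith [hlt, hL]
        rw [hkdef]
        exact log_ineq_to_lt hlogpq hineq
      -- Chernoff
      have hstep : ∀ z ∈ B,
          W z ≤ Real.exp (t*k) * (Real.exp (-t))^(hammingDist x z) * W z := by
        intro z hz
        have hd := hbad z hz
        have h1 : (1:ℝ) ≤ Real.exp (t*k) * (Real.exp (-t))^(hammingDist x z) := by
          rw [← Real.exp_nat_mul, ← Real.exp_add]
          apply Real.one_le_exp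
          nlinarith [mul_nonneg ht0 (sub_nonneg.mpr hd.le)]
        exact le_mul_of_one_le_left (hW0 z).le h1
      have hsum2 : ∑ z : Fin n → Bool, (Real.exp (-t))^(hammingDist x z) * W z
          = (Real.exp (-t) * p + (1-p)) ^ n := by
        have hterm : ∀ z : Fin n → Bool, (Real.exp (-t))^(hammingDist x z) * W z
            = (Real.exp (-t)*p) ^ (hammingDist x z) * (1-p) ^ (n - hammingDist x z) := by
          intro z
          have hWz : W z = p ^ (hammingDist x z) * (1-p) ^ (n - hammingDist x z) := rfl
          rw [hWz, mul_pow]; ring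
        rw [Finset.sum_congr rfl (fun z _ => hterm z), sum_hamming_pow]
      have hchain : M ≤ Real.exp (t*k) * (Real.exp (-t) * p + (1-p)) ^ n := by
        calc M ≤ ∑ z ∈ B, Real.exp (t*k) * (Real.exp (-t))^(hammingDist x z) * W z :=
              Finset.sum_le_sum hstep
          _ ≤ ∑ z : Fin n → Bool,
                Real.exp (t*k) * (Real.exp (-t))^(hammingDist x z) * W z :=
              Finset.sum_le_sum_of_subset_of_nonneg (Finset.subset_univ _)
                (fun z _ _ => mul_nonneg (mul_nonneg (Real.exp_nonneg _)
                  (pow_nonneg (Real.exp_nonneg _) _)) (hW0 z).le)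
          _ = Real.exp (t*k)
              * ∑ z : Fin n → Bool, (Real.exp (-t))^(hammingDist x z) * W z := by
              simp only [mul_assoc]
              rw [← Finset.mul_sum]
          _ = _ := by rw [hsum2]
      have hA : Real.exp (-t) ≤ 1 - t + t^2/2 + (2/9)*t^3 := exp_cubic ht0 (by linarith)
      have hcpq : 0 ≤ Real.exp (-t) * p + (1-p) :=
        add_nonneg (mul_nonneg (Real.exp_nonneg _) hp.le) hq.le
      have hle : Real.exp (-t) * p + (1-p) ≤ Real.exp (p * (-t + t^2/2 + (2/9)*t^3)) := by
        have h1 : Real.exp (-t) * p + (1-p) ≤ 1 + p * (-t + t^2/2 + (2/9)*t^3) := by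
          nlinarith [hA, hp.le]
        have h2 := Real.add_one_le_exp (p * (-t + t^2/2 + (2/9)*t^3))
        linarith
      have hpow : (Real.exp (-t) * p + (1-p))^n
          ≤ Real.exp ((n:ℝ) * (p * (-t + t^2/2 + (2/9)*t^3))) := by
        rw [Real.exp_nat_mul]
        exact pow_le_pow_left₀ hcpq hle n
      have hfinal : M ≤ Real.exp (t*k + (n:ℝ) * (p * (-t + t^2/2 + (2/9)*t^3))) := by
        rw [Real.exp_add]
        calc M ≤ _ := hchain
          _ ≤ _ := mul_le_mul_of_nonneg_left hpow (Real.exp_nonneg _)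
      have hexpbound : t*k + (n:ℝ) * (p * (-t + t^2/2 + (2/9)*t^3))
          ≤ -(19/27) * ((n:ℝ) * ε^2) := by
        rw [htdef, hkdef]
        exact tail_num hp.le hp'.le hε0.le hε3 hn0.le
      have hnε : (n:ℝ) * ε^2 = (n:ℝ) ^ ((1:ℝ)/3) := by
        rw [hεdef]; exact nε_id hn0
      have hμ : Real.exp (-(19/27) * ((n:ℝ)*ε^2)) ≤ μseq n := by
        rw [hnε, μseq, Real.rpow_def_of_pos (by norm_num : (0:ℝ) < 2)]
        exact mu_num (Real.rpow_nonneg hn0.le _)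
      calc M ≤ _ := hfinal
        _ ≤ Real.exp (-(19/27) * ((n:ℝ)*ε^2)) := Real.exp_le_exp.mpr hexpbound
        _ ≤ μseq n := hμ
  refine ⟨P', ⟨fun z => ?_, ?_⟩, ?_, fun z => ?_⟩
  · simp only [hP'def]; split_ifs with h; exacts [(hW0 z).le, le_refl 0]
  · refine le_trans (Finset.sum_le_sum fun z _ => ?_) hWsum.le
    simp only [hP'def]; split_ifs with h; exacts [le_refl _, (hW0 z).le]
  · rw [hGTD]; exact hMμ
  · simp only [hP'def]; split_ifs with h; exacts [h, hτ0.le]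

set_option maxHeartbeats 1000000 in
theorem bsc_smooth_min_entropy (p : ℝ) (hp : 0 < p) (hp' : p < 1/2) :
    (∀ n : ℕ, ∀ x : Fin n → Bool,
      ∃ P' : (Fin n → Bool) → ℝ, IsSubDist P' ∧ GTD P' (bscProb n p x) ≤ μseq n ∧
        ∀ z, P' z ≤ (2 : ℝ) ^ (-(lBound n p))) ∧
    Filter.Tendsto μseq Filter.atTop (nhds 0) ∧
    Filter.Tendsto (fun n : ℕ => lBound n p / (n : ℝ)) Filter.atTop (nhds (binH p)) := by
  refine ⟨fun n x => exists_P' p hp hp' n x, ?_, ?_⟩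
  · -- μseq → 0
    have h13 : Filter.Tendsto (fun n : ℕ => ((n:ℝ)) ^ ((1:ℝ)/3)) Filter.atTop Filter.atTop :=
      (tendsto_rpow_atTop (by norm_num)).comp tendsto_natCast_atTop_atTop
    have hbot : Filter.Tendsto (fun n : ℕ => Real.log 2 * (-((n:ℝ) ^ ((1:ℝ)/3))))
        Filter.atTop Filter.atBot := by
      apply Filter.Tendsto.const_mul_atBot (Real.log_pos one_lt_two)
      exact (Filter.tendsto_neg_atTop_atBot (G := ℝ)).comp h13
    have h2 : Filter.Tendsto (fun n : ℕ => (2:ℝ) ^ (-((n:ℝ) ^ ((1:ℝ)/3))))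
        Filter.atTop (nhds 0) := by
      have heq : ∀ n : ℕ, (2:ℝ) ^ (-((n:ℝ) ^ ((1:ℝ)/3)))
          = Real.exp (Real.log 2 * (-((n:ℝ) ^ ((1:ℝ)/3)))) := fun n =>
        Real.rpow_def_of_pos (by norm_num) _
      exact (Real.tendsto_exp_atBot.comp hbot).congr (fun n => (heq n).symm)
    have h8 : Filter.Tendsto (fun n : ℕ => 8 * ((2:ℝ) ^ (-((n:ℝ) ^ ((1:ℝ)/3)))))
        Filter.atTop (nhds (8 * 0)) := h2.const_mul (8:ℝ)
    rw [mul_zero] at h8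
    exact h8
  · -- lBound n p / n → binH p
    have hinv : Filter.Tendsto (fun n : ℕ => ((n:ℝ) ^ (-(1:ℝ)/3))) Filter.atTop (nhds 0) := by
      have h := (tendsto_rpow_neg_atTop (by norm_num : (0:ℝ) < 1/3)).comp
        (tendsto_natCast_atTop_atTop (R := ℝ))
      exact h.congr (fun n => by norm_num)
    have hmain : Filter.Tendsto
        (fun n : ℕ => binH p - ((n:ℝ) ^ (-(1:ℝ)/3)) * Real.logb 2 ((1-p)/p))
        Filter.atTop (nhds (binH p)) := by
      have h : Filter.Tendsto
          (fun n : ℕ => binH p - ((n:ℝ) ^ (-(1:ℝ)/3)) * Real.logb 2 ((1-p)/p))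
          Filter.atTop (nhds (binH p - 0 * Real.logb 2 ((1-p)/p))) :=
        tendsto_const_nhds.sub (hinv.mul_const (Real.logb 2 ((1-p)/p)))
      rw [zero_mul, sub_zero] at h
      exact h
    apply hmain.congr'
    filter_upwards [Filter.eventually_ge_atTop 1] with n hn
    have hn0 : (0:ℝ) < (n:ℝ) := by exact_mod_cast hn
    rw [lBound]
    field_simp
end
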